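/- For every monotone E3CNF formula φ with n variables and m clauses, the minimum number of tuples whose deletion from I_φ leaves an instance consistent with respect to {A → B, C → B} equals 3m − #τ_max(φ); that is, opt(I_φ) = 3m − #τ_max(φ). -/
import Mathlib


/-- A functional dependency `X → Y` is a pair of attribute sets; two tuples form a
`φ`-conflict if they agree on every attribute of `X` but differ on some attribute of `Y`. -/
def IsPhiConflict {α V : Type*} (X Y : Finset α) (s t : α → V) : Prop :=
  (∀ a ∈ X, s a = t a) ∧ (∃ a ∈ Y, s a ≠ t a)

instance {α V : Type*} [DecidableEq V] (X Y : Finset α) (s t : α → V) :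
    Decidable (IsPhiConflict X Y s t) := by
  unfold IsPhiConflict; infer_instance

/-- Two tuples form a conflict w.r.t. a finite FD set if they form a `φ`-conflict
for some FD `φ` of the set. -/
def IsConflict {α V : Type*} (FDs : Finset (Finset α × Finset α)) (s t : α → V) : Prop :=
  ∃ fd ∈ FDs, IsPhiConflict fd.1 fd.2 s t

instance {α V : Type*} [DecidableEq V] (FDs : Finset (Finset α × Finset α)) (s t : α → V) :
    Decidable (IsConflict FDs s t) := by
  unfold IsConflict; infer_instance

/-- A set of tuples is consistent w.r.t. an FD set if no two of its tuples form a conflict. -/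
def Consistent {α V : Type*} (FDs : Finset (Finset α × Finset α)) (J : Finset (α → V)) : Prop :=
  ∀ s ∈ J, ∀ t ∈ J, ¬ IsConflict FDs s t

/-- `opt FDs I` is the minimum of `dist(J,I) = |I| - |J|` over all consistent subsets `J ⊆ I`. -/
noncomputable def opt {α V : Type*} (FDs : Finset (Finset α × Finset α))
    (I : Finset (α → V)) : ℕ :=
  sInf {d : ℕ | ∃ J ⊆ I, Consistent FDs J ∧ d = I.card - J.card}

/-- A monotone E3CNF formula with `n` variables and `m` clauses: each clause has exactly
three literals over pairwise distinct variables and is monotone, i.e. all its literals have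
the same polarity `pol i` (`true` = all positive, `false` = all negative). -/
structure MonotoneE3CNF (n m : ℕ) where
  lit : Fin m → Fin 3 → Fin n
  pol : Fin m → Bool
  distinct : ∀ i, Function.Injective (lit i)

/-- The number of clauses satisfied by assignment `τ`. -/
def MonotoneE3CNF.numSat {n m : ℕ} (φ : MonotoneE3CNF n m) (τ : Fin n → Bool) : ℕ :=
  (Finset.univ.filter fun i : Fin m => ∃ k, τ (φ.lit i k) = φ.pol i).card

/-- `#τ_max(φ)`: the maximum number of simultaneously satisfiable clauses. -/
def MonotoneE3CNF.maxSat {n m : ℕ} (φ : MonotoneE3CNF n m) : ℕ :=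
  Finset.univ.sup fun τ : Fin n → Bool => φ.numSat τ

/-- Values used in the instance `I_φ`: clause indices `i`, variable indices `j`,
and for each variable `j` two constants `j⁺ = (j, true)` and `j⁻ = (j, false)`;
all pairwise distinct. -/
abbrev Val1 (n m : ℕ) := Sum (Fin m) (Sum (Fin n) (Fin n × Bool))

/-- The tuple built for the `k`-th literal of clause `i`: `(i, j⁺, j)` if the variable
`j = lit i k` occurs positively, `(i, j⁻, j)` if it occurs negatively. -/
def tuple1 {n m : ℕ} (φ : MonotoneE3CNF n m) (i : Fin m) (k : Fin 3) : Fin 3 → Val1 n m :=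
  ![Sum.inl i, Sum.inr (Sum.inr (φ.lit i k, φ.pol i)), Sum.inr (Sum.inl (φ.lit i k))]

/-- The instance `I_φ` over attributes `A = 0`, `B = 1`, `C = 2`. -/
def Iphi1 {n m : ℕ} (φ : MonotoneE3CNF n m) : Finset (Fin 3 → Val1 n m) :=
  Finset.univ.image fun p : Fin m × Fin 3 => tuple1 φ p.1 p.2

/-- The FD set `{A → B, C → B}`. -/
def Sigma1 : Finset (Finset (Fin 3) × Finset (Fin 3)) := {({0}, {1}), ({2}, {1})}

section proofs

variable {n m : ℕ} (φ : MonotoneE3CNF n m)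

lemma isConflict_sigma1 {V : Type*} (s t : Fin 3 → V) :
    IsConflict Sigma1 s t ↔ (s 0 = t 0 ∨ s 2 = t 2) ∧ s 1 ≠ t 1 := by
  simp [IsConflict, IsPhiConflict, Sigma1]; tauto

lemma tuple1_injective :
    Function.Injective (fun p : Fin m × Fin 3 => tuple1 φ p.1 p.2) := by
  rintro ⟨i, k⟩ ⟨i', k'⟩ h
  simp only at h
  have h0 := congrFun h 0
  have h2 := congrFun h 2
  have hi : i = i' := by simpa [tuple1] using h0
  subst hi
  have hl : φ.lit i k = φ.lit i k' := by simpa [tuple1] using h2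
  have hk : k = k' := φ.distinct i hl
  simp [hk]

lemma card_Iphi1 : (Iphi1 φ).card = 3 * m := by
  rw [Iphi1, Finset.card_image_of_injective _ (tuple1_injective φ)]
  simp [mul_comm]

lemma card_le_maxSat {J : Finset (Fin 3 → Val1 n m)} (hJ : J ⊆ Iphi1 φ)
    (hc : Consistent Sigma1 J) : J.card ≤ φ.maxSat := by
  classical
  set S : Finset (Fin m × Fin 3) :=
    Finset.univ.filter (fun p => tuple1 φ p.1 p.2 ∈ J) with hS
  have hmemS : ∀ p : Fin m × Fin 3, p ∈ S ↔ tuple1 φ p.1 p.2 ∈ J := by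
    intro p; simp [hS]
  have hJS : J = S.image (fun p => tuple1 φ p.1 p.2) := by
    ext t
    simp only [Finset.mem_image]
    constructor
    · intro ht
      obtain ⟨p, -, hp⟩ := Finset.mem_image.mp (hJ ht)
      exact ⟨p, (hmemS p).2 (hp ▸ ht), hp⟩
    · rintro ⟨p, hp, rfl⟩; exact (hmemS p).1 hp
  have hcard : J.card = S.card := by
    rw [hJS, Finset.card_image_of_injective _ (tuple1_injective φ)]
  set τ : Fin n → Bool := fun j =>
    decide (∃ p : Fin m × Fin 3, tuple1 φ p.1 p.2 ∈ J ∧ φ.lit p.1 p.2 = j ∧ φ.pol p.1 = true)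
    with hτ
  have key : ∀ p : Fin m × Fin 3, tuple1 φ p.1 p.2 ∈ J → τ (φ.lit p.1 p.2) = φ.pol p.1 := by
    intro p hp
    cases hb : φ.pol p.1 with
    | true => simp only [hτ, decide_eq_true_eq]; exact ⟨p, hp, rfl, hb⟩
    | false =>
      simp only [hτ, decide_eq_false_iff_not]
      rintro ⟨q, hq, hlit, hpol⟩
      refine hc _ hq _ hp ?_
      rw [isConflict_sigma1]
      constructor
      · right; simp [tuple1, hlit]
      · simp [tuple1, hlit, hpol, hb]
  have hsub : ∀ p ∈ S, p.1 ∈ Finset.univ.filter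
      (fun i : Fin m => ∃ k, τ (φ.lit i k) = φ.pol i) := by
    intro p hp
    simp only [Finset.mem_filter, Finset.mem_univ, true_and]
    exact ⟨p.2, key p ((hmemS p).1 hp)⟩
  have hinj : Set.InjOn Prod.fst (S : Set (Fin m × Fin 3)) := by
    rintro ⟨i, k⟩ hik ⟨i', k'⟩ hik' (h1 : i = i')
    subst h1
    have hik : tuple1 φ i k ∈ J := (hmemS _).1 (by exact_mod_cast hik)
    have hik' : tuple1 φ i k' ∈ J := (hmemS _).1 (by exact_mod_cast hik')
    by_contra hne
    have hk : k ≠ k' := by simpa using hne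
    refine hc _ hik _ hik' ?_
    rw [isConflict_sigma1]
    refine ⟨Or.inl (by simp [tuple1]), ?_⟩
    have : φ.lit i k ≠ φ.lit i k' := fun h => hk (φ.distinct i h)
    simp [tuple1, this]
  have h1 : S.card ≤ φ.numSat τ :=
    Finset.card_le_card_of_injOn Prod.fst hsub hinj
  have h2 : φ.numSat τ ≤ φ.maxSat := Finset.le_sup (Finset.mem_univ τ)
  omega

lemma exists_good_J : ∃ J ⊆ Iphi1 φ, Consistent Sigma1 J ∧ J.card = φ.maxSat := by
  classical
  obtain ⟨τ₀, -, hτ₀⟩ := Finset.exists_mem_eq_sup (Finset.univ : Finset (Fin n → Bool))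
    Finset.univ_nonempty (fun τ => φ.numSat τ)
  set ki : Fin m → Fin 3 := fun i =>
    if h : ∃ k, τ₀ (φ.lit i k) = φ.pol i then h.choose else 0 with hki'
  set Sat : Finset (Fin m) :=
    Finset.univ.filter (fun i => ∃ k, τ₀ (φ.lit i k) = φ.pol i) with hSat
  have hki : ∀ i ∈ Sat, τ₀ (φ.lit i (ki i)) = φ.pol i := by
    intro i hi
    have h : ∃ k, τ₀ (φ.lit i k) = φ.pol i := by
      simpa [hSat] using hi
    simp only [hki', dif_pos h]
    exact h.choose_spec
  refine ⟨Sat.image (fun i => tuple1 φ i (ki i)), ?_, ?_, ?_⟩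
  · intro t ht
    obtain ⟨i, -, rfl⟩ := Finset.mem_image.mp ht
    exact Finset.mem_image.mpr ⟨(i, ki i), Finset.mem_univ _, rfl⟩
  · intro s hs t ht hconf
    obtain ⟨i, hi, rfl⟩ := Finset.mem_image.mp hs
    obtain ⟨i', hi', rfl⟩ := Finset.mem_image.mp ht
    rw [isConflict_sigma1] at hconf
    obtain ⟨h02, h1⟩ := hconf
    rcases h02 with h0 | h2
    · have : i = i' := by simpa [tuple1] using h0
      subst this
      exact h1 rfl
    · have hl : φ.lit i (ki i) = φ.lit i' (ki i') := by simpa [tuple1] using h2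
      have hp : φ.pol i = φ.pol i' := by
        rw [← hki i hi, ← hki i' hi', hl]
      exact h1 (by simp [tuple1, hl, hp])
  · rw [Finset.card_image_of_injOn]
    · show Sat.card = φ.maxSat
      rw [MonotoneE3CNF.maxSat, hτ₀]; rfl
    · intro i hi i' hi' h
      have := congrFun h 0
      simpa [tuple1] using this

theorem stmt1' : opt Sigma1 (Iphi1 φ) = 3 * m - φ.maxSat := by
  obtain ⟨J, hJsub, hJcons, hJcard⟩ := exists_good_J φ
  have hmem : 3 * m - φ.maxSat ∈
      {d : ℕ | ∃ J ⊆ Iphi1 φ, Consistent Sigma1 J ∧ d = (Iphi1 φ).card - J.card} :=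
    ⟨J, hJsub, hJcons, by rw [card_Iphi1, hJcard]⟩
  refine le_antisymm (Nat.sInf_le hmem) ?_
  obtain ⟨J', hJ'sub, hJ'cons, hd⟩ := Nat.sInf_mem ⟨_, hmem⟩
  rw [opt, hd, card_Iphi1]
  exact Nat.sub_le_sub_left (card_le_maxSat φ hJ'sub hJ'cons) _

end proofs

/-- For every monotone E3CNF formula `φ` with `n` variables and `m` clauses,
`opt(I_φ) = 3m − #τ_max(φ)` with respect to `{A → B, C → B}`. -/
theorem stmt1 {n m : ℕ} (φ : MonotoneE3CNF n m) :
    opt Sigma1 (Iphi1 φ) = 3 * m - φ.maxSat := stmt1' φ
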